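/- For any tree T of order n, diam(T) ≤ n − b(T) − 1, where b(T) is the number of vertices of T of degree at least 3. -/

import Mathlib

open SimpleGraph Finset
open scoped Classical

noncomputable section

/-- Eccentricity of a vertex. -/
def gecc {V : Type*} (G : SimpleGraph V) [Fintype V] (v : V) : ℕ :=
  Finset.univ.sup fun u => G.dist v u

/-- A broadcast: `f v ≤ e(v)` for all `v`. -/
def IsBroadcast {V : Type*} (G : SimpleGraph V) [Fintype V] (f : V → ℕ) : Prop :=
  ∀ v, f v ≤ gecc G v

/-- `u` hears `f` from `v`. -/
def Hears {V : Type*} (G : SimpleGraph V) (f : V → ℕ) (u v : V) : Prop :=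
  0 < f v ∧ G.dist u v ≤ f v

/-- Boundary independent broadcast: a vertex hearing two or more broadcasting
vertices lies in the boundary of each. -/
def BnIndep {V : Type*} (G : SimpleGraph V) [Fintype V] (f : V → ℕ) : Prop :=
  IsBroadcast G f ∧
    ∀ w v₁ v₂, v₁ ≠ v₂ → Hears G f w v₁ → Hears G f w v₂ → G.dist w v₁ = f v₁

/-- Weight of a broadcast. -/
def bweight {V : Type*} [Fintype V] (f : V → ℕ) : ℕ := ∑ v, f v

/-- The boundary independence number. -/
def alphaBn {V : Type*} (G : SimpleGraph V) [Fintype V] : ℕ :=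
  sSup {w | ∃ f, BnIndep G f ∧ bweight f = w}

/-- Set of branch vertices (degree at least 3). -/
def branchSet {V : Type*} (G : SimpleGraph V) [Fintype V] : Finset V :=
  Finset.univ.filter fun v => 3 ≤ G.degree v

/-- `l` is a leaf joined to `v` by an endpath (all internal vertices of degree 2). -/
def IsEndpathTo {V : Type*} (G : SimpleGraph V) [Fintype V] (v l : V) : Prop :=
  G.degree l = 1 ∧ ∃ p : G.Walk v l, p.IsPath ∧
    ∀ u ∈ p.support, u ≠ v → u ≠ l → G.degree u = 2

/-- Leaf set `L(v)` of a vertex `v`. -/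
def leafSet {V : Type*} (G : SimpleGraph V) [Fintype V] (v : V) : Finset V :=
  Finset.univ.filter fun l => IsEndpathTo G v l

/-- `R(T)`: branch vertices with at most one leaf in their leaf set. -/
def rset {V : Type*} (G : SimpleGraph V) [Fintype V] : Finset V :=
  (branchSet G).filter fun v => (leafSet G v).card ≤ 1

/-- Edge `uv` is covered by broadcasting vertex `x`. -/
def Covers {V : Type*} (G : SimpleGraph V) (f : V → ℕ) (x u v : V) : Prop :=
  0 < f x ∧ G.Adj u v ∧ G.dist u x ≤ f x ∧ G.dist v x ≤ f x ∧
    (G.dist u x < f x ∨ G.dist v x < f x)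

/-- The graph `G - U_f^E` obtained by deleting all `f`-uncovered edges. -/
def coveredSubgraph {V : Type*} (G : SimpleGraph V) (f : V → ℕ) : SimpleGraph V where
  Adj u v := G.Adj u v ∧ ∃ x, Covers G f x u v
  symm := by
    constructor
    rintro u v ⟨h, x, h1, h2, h3, h4, h5⟩
    exact ⟨h.symm, x, h1, h2.symm, h4, h3, h5.symm⟩
  loopless := by constructor; rintro u ⟨h, -⟩; exact G.irrefl h

/-- `f` is a maximal bn-independent broadcast. -/
def MaximalBn {V : Type*} (G : SimpleGraph V) [Fintype V] (f : V → ℕ) : Prop :=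
  BnIndep G f ∧ ∀ g, BnIndep G g → (∀ v, f v ≤ g v) → g = f

/-- The `f`-private boundary of `v`: vertices of `N_f(v)` not dominated once the
broadcast strength of `v` is lowered by one. -/
def privBoundary {V : Type*} (G : SimpleGraph V) (f : V → ℕ) (v : V) : Set V :=
  {u | G.dist u v ≤ f v ∧ ∀ x, ¬ Hears G (Function.update f v (f v - 1)) u x}

/-- The branch representation: branch vertices adjacent iff the path between them
contains no other branch vertex. -/
def branchRep {V : Type*} (G : SimpleGraph V) [Fintype V] : SimpleGraph V where
  Adj b₁ b₂ := b₁ ≠ b₂ ∧ 3 ≤ G.degree b₁ ∧ 3 ≤ G.degree b₂ ∧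
    ∀ p : G.Walk b₁ b₂, p.IsPath → ∀ u ∈ p.support, 3 ≤ G.degree u → u = b₁ ∨ u = b₂
  symm := by
    constructor
    rintro a b ⟨hab, ha, hb, h⟩
    refine ⟨hab.symm, hb, ha, fun p hp u hu hdeg => ?_⟩
    have hu' : u ∈ p.reverse.support := by
      rw [SimpleGraph.Walk.support_reverse]; exact List.mem_reverse.mpr hu
    exact (h p.reverse hp.reverse u hu' hdeg).symm
  loopless := by constructor; rintro v ⟨h, -⟩; exact h rfl

/-- Hearing independent broadcast. -/
def HIndep {V : Type*} (G : SimpleGraph V) [Fintype V] (f : V → ℕ) : Prop :=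
  IsBroadcast G f ∧ ∀ u v, u ≠ v → 0 < f u → 0 < f v → f v < G.dist u v

/-- The hearing independence number. -/
def alphaH {V : Type*} (G : SimpleGraph V) [Fintype V] : ℕ :=
  sSup {w | ∃ f, HIndep G f ∧ bweight f = w}

/-- Diameter. -/
def gdiam {V : Type*} (G : SimpleGraph V) [Fintype V] : ℕ :=
  Finset.univ.sup fun v => gecc G v



namespace Stmt5Aux

variable {V : Type*} {T : SimpleGraph V}

/-- On a geodesic walk, distances split. -/
lemma dist_split (hT : T.IsTree) {u v x : V} (p : T.Walk u v)
    (hp : p.length = T.dist u v) (hx : x ∈ p.support) :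
    T.dist u x + T.dist x v = T.dist u v := by
  have h1 : T.dist u x ≤ (p.takeUntil x hx).length := T.dist_le _
  have h2 : T.dist x v ≤ (p.dropUntil x hx).length := T.dist_le _
  have h3 : (p.takeUntil x hx).length + (p.dropUntil x hx).length = p.length := by
    rw [← SimpleGraph.Walk.length_append, p.take_spec hx]
  have h4 := hT.isConnected.dist_triangle (u := u) (v := x) (w := v)
  omega

/-- L3: two vertices on geodesics from `u` to `l` are comparable. -/
lemma geo_trans (hT : T.IsTree) {u l x y : V}
    (hx : T.dist u x + T.dist x l = T.dist u l)
    (hy : T.dist u y + T.dist y l = T.dist u l)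
    (hle : T.dist u x ≤ T.dist u y) :
    T.dist u x + T.dist x y = T.dist u y := by
  obtain ⟨px, hpx⟩ := hT.isConnected.exists_walk_length_eq_dist u x
  obtain ⟨pxl, hpxl⟩ := hT.isConnected.exists_walk_length_eq_dist x l
  obtain ⟨py, hpy⟩ := hT.isConnected.exists_walk_length_eq_dist u y
  obtain ⟨pyl, hpyl⟩ := hT.isConnected.exists_walk_length_eq_dist y l
  have hPx : (px.append pxl).length = T.dist u l := by
    rw [SimpleGraph.Walk.length_append, hpx, hpxl, hx]
  have hPy : (py.append pyl).length = T.dist u l := by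
    rw [SimpleGraph.Walk.length_append, hpy, hpyl, hy]
  have hPxP := (px.append pxl).isPath_of_length_eq_dist hPx
  have hPyP := (py.append pyl).isPath_of_length_eq_dist hPy
  have heq : px.append pxl = py.append pyl :=
    ((hT.existsUnique_path u l).unique hPxP hPyP)
  have hxm : x ∈ (py.append pyl).support := by
    rw [← heq]
    exact (SimpleGraph.Walk.mem_support_append_iff _ _).2 (Or.inl px.end_mem_support)
  rcases (SimpleGraph.Walk.mem_support_append_iff _ _).1 hxm with h | h
  · exact dist_split hT py hpy h
  · have h5 := dist_split hT pyl hpyl h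
    have h6 := hT.isConnected.dist_triangle (u := u) (v := y) (w := x)
    have h7 : T.dist y x = T.dist x y := T.dist_comm
    have h8 : T.dist y x = 0 := by omega
    have h9 : y = x := (hT.isConnected.dist_eq_zero_iff).1 h8
    subst h9
    simp [T.dist_self]

/-- L2: uniqueness of points at a given distance on geodesics. -/
lemma geo_unique (hT : T.IsTree) {u l x y : V}
    (hx : T.dist u x + T.dist x l = T.dist u l)
    (hy : T.dist u y + T.dist y l = T.dist u l)
    (heq : T.dist u x = T.dist u y) : x = y := by
  have h := geo_trans hT hx hy (le_of_eq heq)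
  have h8 : T.dist x y = 0 := by omega
  exact (hT.isConnected.dist_eq_zero_iff).1 h8

/-- L1: adjacent vertices in a tree have different distances to any vertex. -/
lemma dist_ne_of_adj (hT : T.IsTree) {w a b : V} (hab : T.Adj a b) :
    T.dist w a ≠ T.dist w b := by
  intro h
  obtain ⟨pa, hpa⟩ := hT.isConnected.exists_walk_length_eq_dist w a
  have hbs : b ∉ pa.support := by
    intro hb
    have h1 := dist_split hT pa hpa hb
    have h2 : T.dist b a ≠ 0 := fun h0 =>
      hab.ne ((hT.isConnected.dist_eq_zero_iff).1 h0).symm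
    omega
  have hpaP := pa.isPath_of_length_eq_dist hpa
  have hbs' : b ∉ pa.reverse.support := by
    rw [SimpleGraph.Walk.support_reverse]
    simpa using hbs
  have hP1 : (SimpleGraph.Walk.cons hab.symm pa.reverse).IsPath :=
    hpaP.reverse.cons hbs'
  obtain ⟨pb, hpb⟩ := hT.isConnected.exists_walk_length_eq_dist b w
  have hpbd : pb.length = T.dist b w := hpb
  have hP2 : pb.IsPath := pb.isPath_of_length_eq_dist hpb
  have heq2 : SimpleGraph.Walk.cons hab.symm pa.reverse = pb :=
    (hT.existsUnique_path b w).unique hP1 hP2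
  have hlen := congr_arg SimpleGraph.Walk.length heq2
  rw [SimpleGraph.Walk.length_cons, SimpleGraph.Walk.length_reverse] at hlen
  have hc : T.dist b w = T.dist w b := T.dist_comm
  omega

/-- A vertex all of whose neighbors are at the same distance-minus-one from `v`
on geodesics to it has degree at most one. -/
lemma deg_le_one (hT : T.IsTree) [Fintype V] {u v : V}
    (hstep : ∀ a, T.Adj u a → T.dist v a + 1 = T.dist v u) : T.degree u ≤ 1 := by
  rw [← SimpleGraph.card_neighborFinset_eq_degree]
  apply Finset.card_le_one.2
  intro a ha b hb
  rw [SimpleGraph.mem_neighborFinset] at ha hb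
  have h3 : T.dist a u = 1 := SimpleGraph.dist_eq_one_iff_adj.2 ha.symm
  have h4 : T.dist b u = 1 := SimpleGraph.dist_eq_one_iff_adj.2 hb.symm
  have h5 := hstep a ha
  have h6 := hstep b hb
  exact geo_unique hT (u := v) (l := u) (by omega) (by omega) (by omega)

lemma end_deg (hT : T.IsTree) [Fintype V] {u v : V}
    (hmax : ∀ a, T.dist v a ≤ T.dist v u) : T.degree u ≤ 1 := by
  apply deg_le_one hT (v := v)
  intro a ha
  have h1 : T.dist v a ≠ T.dist v u := dist_ne_of_adj hT ha.symm
  have h3 : T.dist a u = 1 := SimpleGraph.dist_eq_one_iff_adj.2 ha.symm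
  have h2 := hT.isConnected.dist_triangle (u := v) (v := a) (w := u)
  have h4 := hmax a
  omega

lemma exists_leaf (hT : T.IsTree) [Fintype V] {u v b : V}
    (hdle : ∀ x y : V, T.dist x y ≤ T.dist u v)
    (hb : T.dist u b + T.dist b v = T.dist u v) (hdeg : 3 ≤ T.degree b) :
    ∃ l w, T.dist u w = T.dist u b + 1 ∧ T.dist v w = T.dist v b + 1 ∧
      T.dist b w = 1 ∧ T.dist u w + T.dist w l = T.dist u l ∧
      T.degree l ≤ 1 ∧ T.dist u v + 2 ≤ T.dist u l + T.dist l v := by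
  set k := T.dist u b with hk
  set m := T.dist v b with hm
  have hbv : T.dist b v = m := T.dist_comm
  have hkm : k + m = T.dist u v := by omega
  set s := T.neighborFinset b with hs
  set s1 := s.filter (fun a => T.dist u a + 1 = k) with hs1
  set s2 := s.filter (fun a => T.dist v a + 1 = m) with hs2
  have hc1 : s1.card ≤ 1 := by
    apply Finset.card_le_one.2
    intro a ha a' ha'
    rw [hs1, Finset.mem_filter, hs, SimpleGraph.mem_neighborFinset] at ha ha'
    have d1 : T.dist a b = 1 := SimpleGraph.dist_eq_one_iff_adj.2 ha.1.symm
    have d2 : T.dist a' b = 1 := SimpleGraph.dist_eq_one_iff_adj.2 ha'.1.symm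
    exact geo_unique hT (u := u) (l := b) (by omega) (by omega) (by omega)
  have hc2 : s2.card ≤ 1 := by
    apply Finset.card_le_one.2
    intro a ha a' ha'
    rw [hs2, Finset.mem_filter, hs, SimpleGraph.mem_neighborFinset] at ha ha'
    have d1 : T.dist a b = 1 := SimpleGraph.dist_eq_one_iff_adj.2 ha.1.symm
    have d2 : T.dist a' b = 1 := SimpleGraph.dist_eq_one_iff_adj.2 ha'.1.symm
    exact geo_unique hT (u := v) (l := b) (by omega) (by omega) (by omega)
  have hsub : s1 ∪ s2 ⊆ s :=
    Finset.union_subset (Finset.filter_subset _ _) (Finset.filter_subset _ _)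
  have hcard : 3 ≤ s.card := by
    rw [hs, SimpleGraph.card_neighborFinset_eq_degree]; exact hdeg
  have hne : (s \ (s1 ∪ s2)).Nonempty := by
    rw [← Finset.card_pos, Finset.card_sdiff_of_subset hsub]
    have := Finset.card_union_le s1 s2
    omega
  obtain ⟨w, hw⟩ := hne
  rw [Finset.mem_sdiff, Finset.mem_union] at hw
  obtain ⟨hws, hw12⟩ := hw
  have hadj : T.Adj b w := (SimpleGraph.mem_neighborFinset _ _ _).1 hws
  have hwbd : T.dist b w = 1 := SimpleGraph.dist_eq_one_iff_adj.2 hadj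
  have hwbd' : T.dist w b = 1 := by rw [T.dist_comm]; exact hwbd
  have hw1 : T.dist u w + 1 ≠ k := by
    intro hcon; exact hw12 (Or.inl (by rw [hs1, Finset.mem_filter]; exact ⟨hws, hcon⟩))
  have hw2 : T.dist v w + 1 ≠ m := by
    intro hcon; exact hw12 (Or.inr (by rw [hs2, Finset.mem_filter]; exact ⟨hws, hcon⟩))
  have hduw : T.dist u w = k + 1 := by
    have h1 : T.dist u w ≠ k := dist_ne_of_adj hT hadj.symm
    have h2 := hT.isConnected.dist_triangle (u := u) (v := b) (w := w)
    have h3 := hT.isConnected.dist_triangle (u := u) (v := w) (w := b)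
    omega
  have hdvw : T.dist v w = m + 1 := by
    have h1 : T.dist v w ≠ m := dist_ne_of_adj hT hadj.symm
    have h2 := hT.isConnected.dist_triangle (u := v) (v := b) (w := w)
    have h3 := hT.isConnected.dist_triangle (u := v) (v := w) (w := b)
    omega
  set X := Finset.univ.filter (fun x => T.dist u w + T.dist w x = T.dist u x) with hX
  have hwX : w ∈ X := by
    rw [hX, Finset.mem_filter]
    exact ⟨Finset.mem_univ _, by simp [T.dist_self]⟩
  obtain ⟨l, hlX, hlmax⟩ := X.exists_max_image (fun x => T.dist u x) ⟨w, hwX⟩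
  have hl : T.dist u w + T.dist w l = T.dist u l := by
    have := (Finset.mem_filter.1 (hX ▸ hlX)).2; exact this
  refine ⟨l, w, hduw, hdvw, hwbd, hl, ?_, ?_⟩
  · apply deg_le_one hT (v := u)
    intro a ha
    have h1 : T.dist u a ≠ T.dist u l := dist_ne_of_adj hT ha.symm
    have h2 := hT.isConnected.dist_triangle (u := u) (v := l) (w := a)
    have h3 := hT.isConnected.dist_triangle (u := u) (v := a) (w := l)
    have hla : T.dist l a = 1 := SimpleGraph.dist_eq_one_iff_adj.2 ha
    have hal : T.dist a l = 1 := by rw [T.dist_comm]; exact hla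
    by_contra hcon
    have hcase : T.dist u a = T.dist u l + 1 := by omega
    have haX : a ∈ X := by
      rw [hX, Finset.mem_filter]
      refine ⟨Finset.mem_univ _, ?_⟩
      have t1 := hT.isConnected.dist_triangle (u := u) (v := w) (w := a)
      have t2 := hT.isConnected.dist_triangle (u := w) (v := l) (w := a)
      omega
    have := hlmax a haX
    omega
  · have t1 := hT.isConnected.dist_triangle (u := v) (v := l) (w := w)
    have c1 : T.dist l w = T.dist w l := T.dist_comm
    have c2 : T.dist l v = T.dist v l := T.dist_comm
    omega

lemma inj_aux (hT : T.IsTree) {u v b1 b2 l w1 w2 : V}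
    (hOn1 : T.dist u b1 + T.dist b1 v = T.dist u v)
    (hOn2 : T.dist u b2 + T.dist b2 v = T.dist u v)
    (hw1a : T.dist u w1 = T.dist u b1 + 1) (hw1b : T.dist v w1 = T.dist v b1 + 1)
    (hw1c : T.dist u w1 + T.dist w1 l = T.dist u l)
    (hw2a : T.dist u w2 = T.dist u b2 + 1) (hw2bw : T.dist b2 w2 = 1)
    (hw2c : T.dist u w2 + T.dist w2 l = T.dist u l)
    (hlt : T.dist u b1 < T.dist u b2) : False := by
  have t1 := hT.isConnected.dist_triangle (u := u) (v := b2) (w := l)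
  have t2 := hT.isConnected.dist_triangle (u := b2) (v := w2) (w := l)
  have h1 : T.dist u b2 + T.dist b2 l = T.dist u l := by omega
  have h2 : T.dist u w1 + T.dist w1 b2 = T.dist u b2 :=
    geo_trans hT (l := l) hw1c h1 (by omega)
  have t3 := hT.isConnected.dist_triangle (u := w1) (v := b2) (w := v)
  have t4 := hT.isConnected.dist_triangle (u := u) (v := w1) (w := v)
  have c1 : T.dist b1 v = T.dist v b1 := T.dist_comm
  have c2 : T.dist w1 v = T.dist v w1 := T.dist_comm
  omega

end Stmt5Aux


/-- For any tree `T` of order `n`, `diam(T) ≤ n - b(T) - 1`. -/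
theorem stmt5 {V : Type*} [Fintype V] (T : SimpleGraph V) (hT : T.IsTree) :
    gdiam T ≤ Fintype.card V - (branchSet T).card - 1 := by
  classical
  rcases isEmpty_or_nonempty V with hV | hV
  · simp [gdiam, Finset.univ_eq_empty]
  obtain ⟨u, -, hu⟩ :=
    Finset.exists_mem_eq_sup Finset.univ Finset.univ_nonempty (fun v => gecc T v)
  obtain ⟨v, -, hv⟩ :=
    Finset.exists_mem_eq_sup Finset.univ Finset.univ_nonempty (fun x => T.dist u x)
  have hda : gdiam T = T.dist u v := by rw [gdiam, hu, gecc, hv]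
  have hdle : ∀ x y : V, T.dist x y ≤ T.dist u v := by
    intro x y
    have e1 : T.dist x y ≤ gecc T x :=
      show T.dist x y ≤ Finset.univ.sup fun z => T.dist x z from
        Finset.le_sup (Finset.mem_univ y)
    have e2 : gecc T x ≤ gdiam T :=
      show gecc T x ≤ Finset.univ.sup fun z => gecc T z from
        Finset.le_sup (Finset.mem_univ x)
    omega
  by_cases hd0 : T.dist u v = 0
  · rw [hda, hd0]; exact Nat.zero_le _
  have hconn := hT.isConnected
  obtain ⟨q, hq⟩ := hconn.exists_walk_length_eq_dist u v
  set SOn := Finset.univ.filter (fun x => T.dist u x + T.dist x v = T.dist u v) with hSOn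
  have hqsub : q.support.toFinset ⊆ SOn := by
    intro x hx
    rw [hSOn, Finset.mem_filter]
    exact ⟨Finset.mem_univ _, Stmt5Aux.dist_split hT q hq (List.mem_toFinset.1 hx)⟩
  have hOncard : T.dist u v + 1 ≤ SOn.card := by
    have hnd := (q.isPath_of_length_eq_dist hq).support_nodup
    have h1 : q.support.toFinset.card = T.dist u v + 1 := by
      rw [List.toFinset_card_of_nodup hnd, SimpleGraph.Walk.length_support, hq]
    rw [← h1]; exact Finset.card_le_card hqsub
  set SB := branchSet T with hSB
  have hmemSB : ∀ x, x ∈ SB ↔ 3 ≤ T.degree x := by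
    intro x; rw [hSB, branchSet, Finset.mem_filter]
    simp
  have hmemSOn : ∀ x, x ∈ SOn ↔ T.dist u x + T.dist x v = T.dist u v := by
    intro x; rw [hSOn, Finset.mem_filter]; simp
  have hch : ∀ b ∈ SB ∩ SOn, ∃ l w, T.dist u w = T.dist u b + 1 ∧
      T.dist v w = T.dist v b + 1 ∧ T.dist b w = 1 ∧
      T.dist u w + T.dist w l = T.dist u l ∧
      T.degree l ≤ 1 ∧ T.dist u v + 2 ≤ T.dist u l + T.dist l v := by
    intro b hb
    rw [Finset.mem_inter] at hb
    exact Stmt5Aux.exists_leaf hT hdle ((hmemSOn b).1 hb.2) ((hmemSB b).1 hb.1)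
  set F : V → V := fun b => if h : b ∈ SB ∩ SOn then (hch b h).choose else b with hFdef
  have hF : ∀ b ∈ SB ∩ SOn, ∃ w, T.dist u w = T.dist u b + 1 ∧
      T.dist v w = T.dist v b + 1 ∧ T.dist b w = 1 ∧
      T.dist u w + T.dist w (F b) = T.dist u (F b) ∧
      T.degree (F b) ≤ 1 ∧ T.dist u v + 2 ≤ T.dist u (F b) + T.dist (F b) v := by
    intro b hb
    have : F b = (hch b hb).choose := by rw [hFdef]; simp [hb]
    rw [this]
    exact (hch b hb).choose_spec
  have hinj : Set.InjOn F ↑(SB ∩ SOn) := by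
    intro b1 hb1 b2 hb2 heq
    have hb1' : b1 ∈ SB ∩ SOn := hb1
    have hb2' : b2 ∈ SB ∩ SOn := hb2
    obtain ⟨w1, hw1a, hw1b, hw1w, hw1c, -, -⟩ := hF b1 hb1'
    obtain ⟨w2, hw2a, hw2b, hw2w, hw2c, -, -⟩ := hF b2 hb2'
    rw [heq] at hw1c
    have hOn1 := (hmemSOn b1).1 (Finset.mem_inter.1 hb1').2
    have hOn2 := (hmemSOn b2).1 (Finset.mem_inter.1 hb2').2
    by_contra hne
    have hne' : T.dist u b1 ≠ T.dist u b2 := fun h =>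
      hne (Stmt5Aux.geo_unique hT (u := u) (l := v) hOn1 hOn2 h)
    rcases hne'.lt_or_gt with hlt | hlt
    · exact Stmt5Aux.inj_aux hT hOn1 hOn2 hw1a hw1b hw1c hw2a hw2w hw2c hlt
    · exact Stmt5Aux.inj_aux hT hOn2 hOn1 hw2a hw2b hw2c hw1a hw1w hw1c hlt
  have himg : ∀ b ∈ SB ∩ SOn, F b ∉ SOn ∧ F b ∉ SB := by
    intro b hb
    obtain ⟨w, -, -, -, -, hdeg, hfar⟩ := hF b hb
    constructor
    · intro hc
      have := (hmemSOn (F b)).1 hc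
      omega
    · intro hc
      have := (hmemSB (F b)).1 hc
      omega
  set C := (SB ∩ SOn).image F with hC
  have hd1 : Disjoint SOn C := by
    rw [Finset.disjoint_left]
    intro a ha hac
    obtain ⟨b, hbmem, rfl⟩ := Finset.mem_image.1 hac
    exact (himg b hbmem).1 ha
  have hd2 : Disjoint (SB \ SOn) C := by
    rw [Finset.disjoint_left]
    intro a ha hac
    obtain ⟨b, hbmem, rfl⟩ := Finset.mem_image.1 hac
    exact (himg b hbmem).2 (Finset.mem_sdiff.1 ha).1
  have hd3 : Disjoint SOn (SB \ SOn) := Finset.sdiff_disjoint.symm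
  have hcardC : C.card = (SB ∩ SOn).card := Finset.card_image_of_injOn hinj
  have hsum : SOn.card + (SB \ SOn).card + C.card ≤ Fintype.card V := by
    have h1 : (SOn ∪ (SB \ SOn) ∪ C).card = SOn.card + (SB \ SOn).card + C.card := by
      rw [Finset.card_union_of_disjoint (Finset.disjoint_union_left.2 ⟨hd1, hd2⟩),
        Finset.card_union_of_disjoint hd3]
    rw [← h1, ← Finset.card_univ]
    exact Finset.card_le_card (Finset.subset_univ _)
  have hsplit : (SB ∩ SOn).card + (SB \ SOn).card = SB.card :=
    Finset.card_inter_add_card_sdiff _ _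
  rw [hda]
  omega
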